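/- Wick's theorem for i.i.d. standard Gaussians: for i.i.d. centered real Gaussian random variables ω_{x₁}, …, ω_{x_{2n}} (indices may repeat) with unit variance, E[ω_{x₁}⋯ω_{x_{2n}}] = Σ_{π} Π_{{i,j} ∈ π} E[ω_{x_i} ω_{x_j}], where the sum ranges over all perfect matchings π of {1, …, 2n}. -/

import Mathlib

open MeasureTheory ProbabilityTheory Real
open scoped ENNReal NNReal

noncomputable def G (k : ℕ) : ℝ := ∫ x : ℝ, x ^ k * Real.exp (-(1/2) * x ^ 2)

lemma abs_pow_le (k : ℕ) (x : ℝ) : |x| ^ k ≤ k.factorial * Real.exp (|x|) := by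
  have h1 : |x| ^ k / k.factorial ≤ Real.exp |x| := by
    calc |x| ^ k / k.factorial ≤ ∑ i ∈ Finset.range (k+1), |x| ^ i / i.factorial := by
          refine Finset.single_le_sum (f := fun i => |x| ^ i / i.factorial) ?_ (Finset.self_mem_range_succ k)
          intro i _
          positivity
      _ ≤ Real.exp |x| := Real.sum_le_exp_of_nonneg (abs_nonneg x) _
  have hk : (0:ℝ) < k.factorial := by positivity
  calc |x| ^ k = k.factorial * (|x| ^ k / k.factorial) := by field_simp
    _ ≤ k.factorial * Real.exp |x| := by
        exact mul_le_mul_of_nonneg_left h1 hk.le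

lemma intG (k : ℕ) : Integrable (fun x : ℝ => x ^ k * Real.exp (-(1/2) * x ^ 2)) := by
  have hbd : ∀ x : ℝ, ‖x ^ k * Real.exp (-(1/2) * x ^ 2)‖ ≤
      (k.factorial * Real.exp 1) * Real.exp (-(1/4) * x ^ 2) := by
    intro x
    have h1 : |x| ≤ x ^ 2 / 4 + 1 := by nlinarith [sq_nonneg (|x| - 2), sq_abs x]
    have h2 : |x| ^ k ≤ k.factorial * Real.exp (x ^ 2 / 4 + 1) :=
      (abs_pow_le k x).trans (by gcongr <;> simp [h1])
    have : ‖x ^ k * Real.exp (-(1/2) * x ^ 2)‖ = |x| ^ k * Real.exp (-(1/2) * x ^ 2) := by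
      simp [abs_mul, abs_pow, Real.abs_exp]
    rw [this]
    calc |x| ^ k * Real.exp (-(1/2) * x ^ 2)
        ≤ (k.factorial * Real.exp (x ^ 2 / 4 + 1)) * Real.exp (-(1/2) * x ^ 2) := by
          gcongr
      _ = (k.factorial * Real.exp 1) * Real.exp (-(1/4) * x ^ 2) := by
          rw [mul_assoc, mul_assoc, ← Real.exp_add, ← Real.exp_add]; ring_nf
  have hint : Integrable (fun x : ℝ => (k.factorial * Real.exp 1) * Real.exp (-(1/4) * x ^ 2)) :=
    (integrable_exp_neg_mul_sq (by norm_num : (0:ℝ) < 1/4)).const_mul _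
  exact hint.mono' (Continuous.aestronglyMeasurable (by continuity)) (ae_of_all _ hbd)

lemma G_zero : G 0 = Real.sqrt (2 * π) := by
  have h := integral_gaussian (1/2)
  simp only [G, pow_zero, one_mul]
  rw [show (2:ℝ) * π = π / (1/2) by ring]
  exact h

lemma G_one : G 1 = 0 := by
  have := MeasureTheory.integral_neg_eq_self (fun x : ℝ => x ^ 1 * Real.exp (-(1/2) * x ^ 2)) volume
  simp only [G]
  have h2 : ∫ x : ℝ, (-x) ^ 1 * Real.exp (-(1/2) * (-x) ^ 2)
      = ∫ x : ℝ, x ^ 1 * Real.exp (-(1/2) * x ^ 2) := this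
  have h3 : ∫ x : ℝ, (-x) ^ 1 * Real.exp (-(1/2) * (-x) ^ 2)
      = -∫ x : ℝ, x ^ 1 * Real.exp (-(1/2) * x ^ 2) := by
    rw [← integral_neg]; congr 1; funext x; ring_nf
  linarith [h2, h3]

lemma G_rec (k : ℕ) : G (k + 2) = (k + 1) * G k := by
  have hu : ∀ x : ℝ, HasDerivAt (fun x : ℝ => x ^ (k+1)) ((k+1) * x ^ k) x := by
    intro x
    simpa using hasDerivAt_pow (k+1) x
  have hv : ∀ x : ℝ, HasDerivAt (fun x : ℝ => -Real.exp (-(1/2) * x ^ 2))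
      (x * Real.exp (-(1/2) * x ^ 2)) x := by
    intro x
    have h1 : HasDerivAt (fun x : ℝ => -(1/2) * x ^ 2) (-(1/2) * (2 * x)) x := by
      simpa using (hasDerivAt_pow 2 x).const_mul (-(1/2):ℝ)
    have h2 := (h1.exp).neg
    exact h2.congr_deriv (by ring)
  have huv' : Integrable ((fun x : ℝ => x ^ (k+1)) * fun x => x * Real.exp (-(1/2) * x ^ 2)) := by
    have := intG (k+2)
    refine this.congr ?_
    refine ae_of_all _ fun x => ?_
    simp only [Pi.mul_apply, Pi.neg_apply]; ring
  have hu'v : Integrable ((fun x : ℝ => (k+1) * x ^ k) * fun x => -Real.exp (-(1/2) * x ^ 2)) := by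
    have := ((intG k).const_mul ((k:ℝ)+1)).neg
    refine this.congr (ae_of_all _ fun x => ?_)
    simp only [Pi.mul_apply, Pi.neg_apply]; ring
  have huv : Integrable ((fun x : ℝ => x ^ (k+1)) * fun x => -Real.exp (-(1/2) * x ^ 2)) := by
    have := (intG (k+1)).neg
    refine this.congr (ae_of_all _ fun x => ?_)
    simp only [Pi.mul_apply, Pi.neg_apply]; ring
  have := MeasureTheory.integral_mul_deriv_eq_deriv_mul_of_integrable (fun x _ => hu x) (fun x _ => hv x) huv' hu'v huv
  have hL : ∫ x : ℝ, x ^ (k+1) * (x * Real.exp (-(1/2) * x ^ 2)) = G (k+2) := by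
    simp only [G]; congr 1; funext x; ring
  have hR : ∫ x : ℝ, ((k:ℝ)+1) * x ^ k * -Real.exp (-(1/2) * x ^ 2)
      = -(((k:ℝ)+1) * G k) := by
    simp only [G]
    calc ∫ x : ℝ, ((k:ℝ)+1) * x ^ k * -Real.exp (-(1/2) * x ^ 2)
        = ∫ x : ℝ, -(((k:ℝ)+1) * (x ^ k * Real.exp (-(1/2) * x ^ 2))) := by
          congr 1; funext x; ring
      _ = -∫ x : ℝ, ((k:ℝ)+1) * (x ^ k * Real.exp (-(1/2) * x ^ 2)) := integral_neg _
      _ = -(((k:ℝ)+1) * ∫ x : ℝ, x ^ k * Real.exp (-(1/2) * x ^ 2)) := by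
          rw [integral_const_mul]
  rw [hL, hR] at this
  ring_nf at this ⊢
  linarith [this]

lemma pdf_eq (x : ℝ) : gaussianPDFReal 0 1 x = (Real.sqrt (2 * π))⁻¹ * Real.exp (-(1/2) * x ^ 2) := by
  simp only [gaussianPDFReal, NNReal.coe_one, mul_one, sub_zero]
  congr 1
  ring

noncomputable def gm (k : ℕ) : ℝ := ∫ x, x ^ k ∂(gaussianReal 0 1)

lemma gauss_eq_wd : gaussianReal 0 1 =
    volume.withDensity (fun x => ((gaussianPDFReal 0 1 x).toNNReal : ℝ≥0∞)) := by
  rw [gaussianReal_of_var_ne_zero 0 one_ne_zero]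
  congr 1

lemma integrable_pow_gaussian (k : ℕ) :
    Integrable (fun t : ℝ => t ^ k) (gaussianReal 0 1) := by
  rw [gauss_eq_wd, integrable_withDensity_iff ((measurable_gaussianPDFReal 0 1).real_toNNReal.coe_nnreal_ennreal) (ae_of_all _ fun x => ENNReal.coe_lt_top)]
  have : Integrable (fun x : ℝ => (Real.sqrt (2 * π))⁻¹ * (x ^ k * Real.exp (-(1/2) * x ^ 2))) :=
    (intG k).const_mul _
  refine this.congr (ae_of_all _ fun x => ?_)
  dsimp only
  rw [ENNReal.coe_toReal, Real.coe_toNNReal _ (gaussianPDFReal_nonneg 0 1 x), pdf_eq]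
  ring

lemma gm_eq_G (k : ℕ) : gm k = (Real.sqrt (2 * π))⁻¹ * G k := by
  rw [gm, gauss_eq_wd, integral_withDensity_eq_integral_smul ((measurable_gaussianPDFReal 0 1).real_toNNReal) (fun x => x ^ k)]
  rw [G, ← integral_const_mul]
  congr 1; funext x
  rw [NNReal.smul_def, smul_eq_mul, Real.coe_toNNReal _ (gaussianPDFReal_nonneg 0 1 x), pdf_eq]
  ring

lemma gm_zero : gm 0 = 1 := by
  rw [gm_eq_G, G_zero, inv_mul_cancel₀]
  positivity

lemma gm_one : gm 1 = 0 := by rw [gm_eq_G, G_one, mul_zero]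

lemma gm_rec (k : ℕ) : gm (k + 2) = (k + 1) * gm k := by
  rw [gm_eq_G, gm_eq_G, G_rec]; ring


def dbf : ℕ → ℕ
  | 0 => 1
  | 1 => 0
  | (k+2) => (k+1) * dbf k

section Comb

variable {ι : Type} [DecidableEq ι]

/-- Extension of a permutation of the complement of `{a, b}` by the transposition `(a b)`. -/
def extFun (a b : ι) (τ : Equiv.Perm {c : ι // c ≠ a ∧ c ≠ b}) (i : ι) : ι :=
  if h1 : i = a then b else if h2 : i = b then a else ↑(τ ⟨i, h1, h2⟩)

lemma extFun_a (a b : ι) (τ : Equiv.Perm {c : ι // c ≠ a ∧ c ≠ b}) : extFun a b τ a = b :=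
  dif_pos rfl

lemma extFun_b (a b : ι) (hb : b ≠ a) (τ : Equiv.Perm {c : ι // c ≠ a ∧ c ≠ b}) :
    extFun a b τ b = a := by
  rw [extFun, dif_neg hb, dif_pos rfl]

lemma extFun_other (a b : ι) (τ : Equiv.Perm {c : ι // c ≠ a ∧ c ≠ b}) {i : ι}
    (h1 : i ≠ a) (h2 : i ≠ b) : extFun a b τ i = ↑(τ ⟨i, h1, h2⟩) := by
  rw [extFun, dif_neg h1, dif_neg h2]

lemma extFun_invol (a b : ι) (hb : b ≠ a) (τ : Equiv.Perm {c : ι // c ≠ a ∧ c ≠ b})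
    (hτ : ∀ c, τ (τ c) = c) : Function.Involutive (extFun a b τ) := by
  intro i
  by_cases h1 : i = a
  · subst h1
    rw [extFun_a, extFun_b _ _ hb]
  · by_cases h2 : i = b
    · subst h2
      rw [extFun_b _ _ hb, extFun_a]
    · rw [extFun_other a b τ h1 h2,
        extFun_other a b τ (τ ⟨i, h1, h2⟩).2.1 (τ ⟨i, h1, h2⟩).2.2]
      have : (⟨↑(τ ⟨i, h1, h2⟩), (τ ⟨i, h1, h2⟩).2.1, (τ ⟨i, h1, h2⟩).2.2⟩ :
          {c : ι // c ≠ a ∧ c ≠ b}) = τ ⟨i, h1, h2⟩ := rfl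
      rw [this, hτ]

def extPerm (a b : ι) (hb : b ≠ a) (τ : Equiv.Perm {c : ι // c ≠ a ∧ c ≠ b})
    (hτ : ∀ c, τ (τ c) = c) : Equiv.Perm ι :=
  Function.Involutive.toPerm _ (extFun_invol a b hb τ hτ)

lemma extPerm_apply (a b : ι) (hb : b ≠ a) (τ : Equiv.Perm {c : ι // c ≠ a ∧ c ≠ b})
    (hτ : ∀ c, τ (τ c) = c) (i : ι) : extPerm a b hb τ hτ i = extFun a b τ i := rfl

lemma extPerm_ffi (a b : ι) (hb : b ≠ a) (τ : Equiv.Perm {c : ι // c ≠ a ∧ c ≠ b})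
    (hτ : ∀ c, τ (τ c) = c) (hτ3 : ∀ c, τ c ≠ c) (i : ι) : extPerm a b hb τ hτ i ≠ i := by
  rw [extPerm_apply]
  by_cases h1 : i = a
  · subst h1; rw [extFun_a]; exact hb
  · by_cases h2 : i = b
    · subst h2; rw [extFun_b _ _ hb]
      exact fun h => hb h.symm
    · rw [extFun_other a b τ h1 h2]
      intro h
      exact hτ3 ⟨i, h1, h2⟩ (Subtype.ext h)

def resFun (a b : ι) (σ : Equiv.Perm ι) (h2 : ∀ i, σ (σ i) = i) (hab : σ a = b)
    (c : {c : ι // c ≠ a ∧ c ≠ b}) : {c : ι // c ≠ a ∧ c ≠ b} :=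
  ⟨σ c.1,
    fun h => c.2.2 (by rw [← h2 c.1, h, hab]),
    fun h => c.2.1 (σ.injective (h.trans hab.symm))⟩

def resPerm (a b : ι) (σ : Equiv.Perm ι) (h2 : ∀ i, σ (σ i) = i) (hab : σ a = b) :
    Equiv.Perm {c : ι // c ≠ a ∧ c ≠ b} :=
  Function.Involutive.toPerm (resFun a b σ h2 hab) (fun c => Subtype.ext (h2 c.1))

lemma resPerm_apply (a b : ι) (σ : Equiv.Perm ι) (h2 : ∀ i, σ (σ i) = i) (hab : σ a = b)
    (c : {c : ι // c ≠ a ∧ c ≠ b}) :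
    (resPerm a b σ h2 hab c : ι) = σ c.1 := rfl

def pairEquiv (a b : ι) (hba : b ≠ a) :
    {σ : Equiv.Perm ι // ((∀ i, σ (σ i) = i) ∧ ∀ i, σ i ≠ i) ∧ σ a = b} ≃
    {τ : Equiv.Perm {c : ι // c ≠ a ∧ c ≠ b} // (∀ c, τ (τ c) = c) ∧ ∀ c, τ c ≠ c} where
  toFun σp :=
    ⟨resPerm a b σp.1 σp.2.1.1 σp.2.2,
      fun c => Subtype.ext (σp.2.1.1 c.1),
      fun c h => σp.2.1.2 c.1 (congrArg Subtype.val h)⟩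
  invFun τp :=
    ⟨extPerm a b hba τp.1 τp.2.1,
      ⟨extFun_invol a b hba τp.1 τp.2.1,
       extPerm_ffi a b hba τp.1 τp.2.1 τp.2.2⟩,
      by rw [extPerm_apply, extFun_a]⟩
  left_inv := by
    rintro ⟨σ, ⟨h2, h3⟩, hab⟩
    refine Subtype.ext (Equiv.ext fun i => ?_)
    show extFun a b _ i = σ i
    by_cases ha' : i = a
    · subst ha'; rw [extFun_a, hab]
    · by_cases hb' : i = b
      · subst hb'
        rw [extFun_b _ _ hba, ← hab, h2]
      · rw [extFun_other a b _ ha' hb']; rfl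
  right_inv := by
    rintro ⟨τ, hτ2, hτ3⟩
    refine Subtype.ext (Equiv.ext fun c => Subtype.ext ?_)
    show extFun a b τ c.1 = (τ c).1
    rw [extFun_other a b τ c.2.1 c.2.2]

lemma card_inv : ∀ (N : ℕ) (ι : Type) [DecidableEq ι] [Fintype ι], Fintype.card ι = N →
    Fintype.card {σ : Equiv.Perm ι // (∀ i, σ (σ i) = i) ∧ ∀ i, σ i ≠ i} = dbf N := by
  intro N
  induction N using Nat.strong_induction_on with
  | _ N IH =>
    intro ι _ _ hcard
    match N, hcard with
    | 0, hcard =>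
      have : IsEmpty ι := Fintype.card_eq_zero_iff.mp hcard
      rw [show dbf 0 = 1 from rfl]
      refine Fintype.card_eq_one_iff.mpr ?_
      refine ⟨⟨1, fun i => isEmptyElim i, fun i => isEmptyElim i⟩, ?_⟩
      rintro ⟨τ, _, _⟩
      exact Subtype.ext (Equiv.ext fun i => isEmptyElim i)
    | (M+1), hcard =>
      have : Nonempty ι := Fintype.card_pos_iff.mp (by omega)
      obtain ⟨a⟩ := this
      classical
      have hsig : Fintype.card {σ : Equiv.Perm ι // (∀ i, σ (σ i) = i) ∧ ∀ i, σ i ≠ i}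
          = ∑ b : ι, Fintype.card
            {σ : Equiv.Perm ι // ((∀ i, σ (σ i) = i) ∧ ∀ i, σ i ≠ i) ∧ σ a = b} := by
        rw [← Fintype.card_sigma]
        refine Fintype.card_congr ?_
        refine Equiv.trans (Equiv.sigmaFiberEquiv
          (fun σ : {σ : Equiv.Perm ι // (∀ i, σ (σ i) = i) ∧ ∀ i, σ i ≠ i} => σ.1 a)).symm ?_
        refine Equiv.sigmaCongrRight fun b => ?_
        exact Equiv.subtypeSubtypeEquivSubtypeInter
          (fun σ : Equiv.Perm ι => (∀ i, σ (σ i) = i) ∧ ∀ i, σ i ≠ i) (fun σ => σ a = b)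
      rw [hsig]
      have ha0 : Fintype.card
          {σ : Equiv.Perm ι // ((∀ i, σ (σ i) = i) ∧ ∀ i, σ i ≠ i) ∧ σ a = a} = 0 := by
        refine Fintype.card_eq_zero_iff.mpr ?_
        refine ⟨fun ⟨σ, ⟨_, h3⟩, hfix⟩ => h3 a hfix⟩
      have hb : ∀ b : ι, b ≠ a → Fintype.card
          {σ : Equiv.Perm ι // ((∀ i, σ (σ i) = i) ∧ ∀ i, σ i ≠ i) ∧ σ a = b}
          = dbf (M - 1) := by
        intro b hba
        have hcard2 : Fintype.card {c : ι // c ≠ a ∧ c ≠ b} = M - 1 := by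
          rw [Fintype.card_subtype]
          have : Finset.univ.filter (fun c : ι => c ≠ a ∧ c ≠ b) = Finset.univ \ {a, b} := by
            ext c; simp [and_comm]
          rw [this, Finset.card_sdiff_of_subset (by simp)]
          rw [Finset.card_pair (Ne.symm hba), Finset.card_univ, hcard]
          omega
        have hlt : M - 1 < M + 1 := by omega
        have IH2 := IH (M-1) hlt {c : ι // c ≠ a ∧ c ≠ b} hcard2
        rw [← IH2]
        exact Fintype.card_congr (pairEquiv a b hba)
      rw [← Finset.sum_erase_add _ _ (Finset.mem_univ a), ha0, Nat.add_zero]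
      rw [Finset.sum_congr rfl (fun b hbmem => hb b (Finset.ne_of_mem_erase hbmem))]
      rw [Finset.sum_const, smul_eq_mul, Finset.card_erase_of_mem (Finset.mem_univ a),
        Finset.card_univ, hcard]
      match M with
      | 0 => rfl
      | (m+1) => rfl

end Comb

section Fiber

variable {Λ : Type*} [DecidableEq Λ] {N : ℕ} (x : Fin N → Λ)

def glueFun (T : ∀ y : ↑(Finset.image x Finset.univ), Equiv.Perm {i : Fin N // x i = ↑y})
    (i : Fin N) : Fin N :=
  ↑(T ⟨x i, Finset.mem_image_of_mem x (Finset.mem_univ i)⟩ ⟨i, rfl⟩)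

lemma glueFun_eq (T : ∀ y : ↑(Finset.image x Finset.univ), Equiv.Perm {i : Fin N // x i = ↑y})
    (y : ↑(Finset.image x Finset.univ)) (i : Fin N) (hi : x i = ↑y) :
    glueFun x T i = ↑(T y ⟨i, hi⟩) := by
  rcases y with ⟨yv, hy⟩
  dsimp only at hi
  subst hi
  rfl

lemma glueFun_x (T : ∀ y : ↑(Finset.image x Finset.univ), Equiv.Perm {i : Fin N // x i = ↑y})
    (i : Fin N) : x (glueFun x T i) = x i :=
  (T ⟨x i, Finset.mem_image_of_mem x (Finset.mem_univ i)⟩ ⟨i, rfl⟩).2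

lemma glueFun_invol (T : ∀ y : ↑(Finset.image x Finset.univ), Equiv.Perm {i : Fin N // x i = ↑y})
    (hT : ∀ y j, T y (T y j) = j) : Function.Involutive (glueFun x T) := by
  intro i
  set y : ↑(Finset.image x Finset.univ) :=
    ⟨x i, Finset.mem_image_of_mem x (Finset.mem_univ i)⟩ with hy
  rw [glueFun_eq x T y (glueFun x T i) (glueFun_x x T i)]
  have h1 : (⟨glueFun x T i, glueFun_x x T i⟩ : {j : Fin N // x j = ↑y}) = T y ⟨i, rfl⟩ :=
    Subtype.ext rfl
  rw [h1, hT]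

lemma glueFun_ffi (T : ∀ y : ↑(Finset.image x Finset.univ), Equiv.Perm {i : Fin N // x i = ↑y})
    (hT3 : ∀ y j, T y j ≠ j) (i : Fin N) : glueFun x T i ≠ i := by
  intro h
  exact hT3 _ ⟨i, rfl⟩ (Subtype.ext h)

def fiberEquiv :
    {σ : {σ : Equiv.Perm (Fin N) // (∀ i, σ (σ i) = i) ∧ ∀ i, σ i ≠ i} //
        ∀ i, x (σ.1 i) = x i} ≃
    ∀ y : ↑(Finset.image x Finset.univ),
      {τ : Equiv.Perm {i : Fin N // x i = ↑y} // (∀ j, τ (τ j) = j) ∧ ∀ j, τ j ≠ j} where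
  toFun σp y :=
    ⟨Function.Involutive.toPerm
      (fun j => ⟨σp.1.1 j.1, by rw [σp.2]; exact j.2⟩)
      (fun j => Subtype.ext (σp.1.2.1 j.1)),
     fun j => Subtype.ext (σp.1.2.1 j.1),
     fun j h => σp.1.2.2 j.1 (congrArg Subtype.val h)⟩
  invFun T :=
    ⟨⟨Function.Involutive.toPerm (glueFun x (fun y => (T y).1))
        (glueFun_invol x _ (fun y => (T y).2.1)),
      glueFun_invol x _ (fun y => (T y).2.1),
      glueFun_ffi x _ (fun y j => (T y).2.2 j)⟩,
     fun i => glueFun_x x (fun y => (T y).1) i⟩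
  left_inv σp := Subtype.ext (Subtype.ext (Equiv.ext fun i => rfl))
  right_inv T := by
    funext y
    refine Subtype.ext (Equiv.ext fun j => Subtype.ext ?_)
    show glueFun x (fun y => (T y).1) j.1 = ((T y).1 j).1
    rw [glueFun_eq x _ y j.1 j.2]

lemma card_matchings :
    Fintype.card {σ : {σ : Equiv.Perm (Fin N) // (∀ i, σ (σ i) = i) ∧ ∀ i, σ i ≠ i} //
        ∀ i, x (σ.1 i) = x i}
    = ∏ y ∈ Finset.image x Finset.univ,
        dbf (Finset.univ.filter (fun i => x i = y)).card := by
  rw [Fintype.card_congr (fiberEquiv x), Fintype.card_pi]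
  rw [Finset.prod_congr rfl (fun (y : ↑(Finset.image x Finset.univ)) _ =>
    card_inv ((Finset.univ.filter (fun i => x i = ↑y)).card) _ (Fintype.card_subtype _))]
  exact Finset.prod_coe_sort _ (fun y => dbf ((Finset.univ.filter (fun i => x i = y)).card))

end Fiber


lemma gm_def (k : ℕ) : gm k = ∫ t, t ^ k ∂(gaussianReal 0 1) := rfl
lemma dbf_zero : dbf 0 = 1 := rfl
lemma dbf_one : dbf 1 = 0 := rfl
lemma dbf_rec (k : ℕ) : dbf (k + 2) = (k + 1) * dbf k := rfl

lemma gm_eq_dbf (k : ℕ) : gm k = (dbf k : ℝ) := by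
  induction k using Nat.strong_induction_on with
  | _ k IH =>
    match k with
    | 0 => rw [gm_zero, dbf_zero]; norm_num
    | 1 => rw [gm_one, dbf_one]; norm_num
    | (m+2) =>
      rw [gm_rec, IH m (by omega), dbf_rec]
      push_cast
      ring

section Prob

variable {Ω : Type*} [MeasurableSpace Ω] (P : Measure Ω) [IsProbabilityMeasure P]
  {Λ : Type*} (F : Λ → Ω → ℝ)

lemma indep_prod_integral (hmeas : ∀ y, Measurable (F y))
    (hindep : iIndepFun F P) (hint : ∀ y, Integrable (F y) P)
    (s : Finset Λ) :
    Integrable (fun a => ∏ y ∈ s, F y a) P ∧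
      ∫ a, ∏ y ∈ s, F y a ∂P = ∏ y ∈ s, ∫ a, F y a ∂P := by
  classical
  induction s using Finset.induction with
  | empty => simp
  | @insert z s hnotmem ih =>
    have hIF : IndepFun (∏ j ∈ s, F j) (F z) P :=
      hindep.indepFun_finset_prod_of_notMem hmeas hnotmem
    have hintprod : Integrable (∏ j ∈ s, F j) P := by
      refine ih.1.congr (ae_of_all _ fun a => ?_)
      rw [Finset.prod_apply]
    have hmul : Integrable (F z * ∏ j ∈ s, F j) P :=
      hIF.symm.integrable_mul (hint z) hintprod
    constructor
    · refine hmul.congr (ae_of_all _ fun a => ?_)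
      simp [Finset.prod_insert hnotmem]
    · have key := hIF.symm.integral_mul_eq_mul_integral (hint z).aestronglyMeasurable hintprod.aestronglyMeasurable
      have e1 : ∫ a, ∏ y ∈ insert z s, F y a ∂P = ∫ a, (F z * ∏ j ∈ s, F j) a ∂P := by
        congr 1; funext a
        rw [Pi.mul_apply, Finset.prod_apply, Finset.prod_insert hnotmem]
      have e2 : ∫ a, (∏ j ∈ s, F j) a ∂P = ∫ a, ∏ y ∈ s, F y a ∂P := by
        congr 1; funext a; rw [Finset.prod_apply]
      rw [e1, show (fun a => (F z * ∏ j ∈ s, F j) a) = F z * ∏ j ∈ s, F j from rfl, key,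
        Finset.prod_insert hnotmem, e2, ih.2]

end Prob

section Main

variable {Ω : Type*} [MeasurableSpace Ω] (P : Measure Ω) [IsProbabilityMeasure P]
  {Λ : Type*} (ω : Λ → Ω → ℝ)

lemma moment_eq (hmeas : ∀ x, Measurable (ω x))
    (hgauss : ∀ x, Measure.map (ω x) P = gaussianReal 0 1) (y : Λ) (k : ℕ) :
    ∫ a, (ω y a) ^ k ∂P = gm k := by
  have h1 : gm k = ∫ t, t ^ k ∂(Measure.map (ω y) P) := by rw [hgauss y, gm_def]
  rw [h1]
  exact (integral_map (hmeas y).aemeasurable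
    ((measurable_id.pow_const k).aestronglyMeasurable)).symm

lemma integrable_pow (hmeas : ∀ x, Measurable (ω x))
    (hgauss : ∀ x, Measure.map (ω x) P = gaussianReal 0 1) (y : Λ) (k : ℕ) :
    Integrable (fun a => (ω y a) ^ k) P := by
  have h := integrable_pow_gaussian k
  rw [← hgauss y] at h
  have h2 := (integrable_map_measure
    ((measurable_id.pow_const k).aestronglyMeasurable) (hmeas y).aemeasurable).mp h
  exact h2.congr (ae_of_all _ fun a => rfl)

lemma cov_eq (hmeas : ∀ x, Measurable (ω x))
    (hindep : iIndepFun ω P)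
    (hgauss : ∀ x, Measure.map (ω x) P = gaussianReal 0 1) (y z : Λ) [Decidable (y = z)] :
    ∫ a, ω y a * ω z a ∂P = if y = z then 1 else 0 := by
  by_cases h : y = z
  · subst h
    rw [if_pos rfl]
    have e : ∫ a, ω y a * ω y a ∂P = ∫ a, (ω y a) ^ 2 ∂P := by
      congr 1; funext a; ring
    rw [e, moment_eq P ω hmeas hgauss y 2, show (2:ℕ) = 0 + 2 from rfl, gm_rec, gm_zero]
    norm_num
  · rw [if_neg h]
    have hIF : IndepFun (ω y) (ω z) P := hindep.indepFun h
    have key := hIF.integral_mul_eq_mul_integral (hmeas y).aestronglyMeasurable (hmeas z).aestronglyMeasurable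
    have h1 : ∫ a, ω y a ∂P = 0 := by
      have hm1 := moment_eq P ω hmeas hgauss y 1
      simp only [pow_one] at hm1
      rw [hm1, gm_one]
    rw [show (∫ a, ω y a * ω z a ∂P) = ∫ a, (ω y * ω z) a ∂P from rfl, key, h1, zero_mul]

end Main

/-- Wick's theorem for i.i.d. standard Gaussians: for i.i.d. centered real Gaussian
random variables `ω x` with unit variance and any indices `x₁, …, x_{2n}`
(repetitions allowed),
`E[ω_{x₁}⋯ω_{x_{2n}}] = Σ_π Π_{{i,j} ∈ π} E[ω_{x_i} ω_{x_j}]`,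
where the sum ranges over all perfect matchings `π` of `{1, …, 2n}`, encoded as
fixed-point-free involutions of `Fin (2n)` with each pair counted once. -/
theorem wick_theorem_gaussian
    {Ω : Type*} [MeasurableSpace Ω] (P : Measure Ω) [IsProbabilityMeasure P]
    {Λ : Type*} (ω : Λ → Ω → ℝ)
    (hmeas : ∀ x, Measurable (ω x))
    (hindep : iIndepFun ω P)
    (hgauss : ∀ x, Measure.map (ω x) P = gaussianReal 0 1)
    (n : ℕ) (x : Fin (2 * n) → Λ) :
    ∫ a, ∏ i, ω (x i) a ∂P =
      ∑ σ : {σ : Equiv.Perm (Fin (2 * n)) // (∀ i, σ (σ i) = i) ∧ ∀ i, σ i ≠ i},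
        ∏ i ∈ Finset.univ.filter (fun i : Fin (2 * n) => i < σ.1 i),
          ∫ a, ω (x i) a * ω (x (σ.1 i)) a ∂P := by
  classical
  set s : Finset Λ := Finset.image x Finset.univ with hs
  set m : Λ → ℕ := fun y => (Finset.univ.filter (fun i => x i = y)).card with hm
  -- LHS
  have hLHS : ∫ a, ∏ i, ω (x i) a ∂P = ∏ y ∈ s, gm (m y) := by
    have hsplit : ∀ a, ∏ i, ω (x i) a = ∏ y ∈ s, (ω y a) ^ (m y) := by
      intro a
      rw [← Finset.prod_fiberwise_of_maps_to (g := x) (t := s)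
        (fun i _ => Finset.mem_image_of_mem x (Finset.mem_univ i)) (fun i => ω (x i) a)]
      refine Finset.prod_congr rfl fun y hy => ?_
      rw [Finset.prod_congr rfl (fun i hi => by
        rw [(Finset.mem_filter.mp hi).2]), Finset.prod_const, hm]
    have := indep_prod_integral P (fun y => fun a => (ω y a) ^ (m y))
      (fun y => (hmeas y).pow_const _)
      (hindep.comp (fun y => fun t : ℝ => t ^ (m y)) (fun y => measurable_id.pow_const _))
      (fun y => integrable_pow P ω hmeas hgauss y (m y)) s
    rw [show (fun a => ∏ i, ω (x i) a) = fun a => ∏ y ∈ s, (ω y a) ^ (m y)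
        from funext hsplit, this.2]
    exact Finset.prod_congr rfl fun y _ => moment_eq P ω hmeas hgauss y (m y)
  -- RHS
  have hRHS : (∑ σ : {σ : Equiv.Perm (Fin (2 * n)) // (∀ i, σ (σ i) = i) ∧ ∀ i, σ i ≠ i},
        ∏ i ∈ Finset.univ.filter (fun i : Fin (2 * n) => i < σ.1 i),
          ∫ a, ω (x i) a * ω (x (σ.1 i)) a ∂P)
      = (Fintype.card {σ : {σ : Equiv.Perm (Fin (2 * n)) //
          (∀ i, σ (σ i) = i) ∧ ∀ i, σ i ≠ i} // ∀ i, x (σ.1 i) = x i} : ℝ) := by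
    have hterm : ∀ σ : {σ : Equiv.Perm (Fin (2 * n)) // (∀ i, σ (σ i) = i) ∧ ∀ i, σ i ≠ i},
        (∏ i ∈ Finset.univ.filter (fun i : Fin (2 * n) => i < σ.1 i),
          ∫ a, ω (x i) a * ω (x (σ.1 i)) a ∂P)
        = if (∀ i, x (σ.1 i) = x i) then (1:ℝ) else 0 := by
      rintro ⟨σ, h2, h3⟩
      by_cases hall : ∀ i, x (σ i) = x i
      · rw [if_pos hall]
        refine Finset.prod_eq_one fun i _ => ?_
        rw [cov_eq P ω hmeas hindep hgauss, if_pos (hall i).symm]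
      · rw [if_neg hall]
        push_neg at hall
        obtain ⟨i, hi⟩ := hall
        have hne : σ i ≠ i := h3 i
        rcases lt_or_gt_of_ne hne with hlt | hgt
        · -- σ i < i ; use j := σ i
          refine Finset.prod_eq_zero (i := σ i) ?_ ?_
          · simp only [Finset.mem_filter, Finset.mem_univ, true_and]
            rw [h2]
            exact hlt
          · rw [cov_eq P ω hmeas hindep hgauss, if_neg]
            rw [h2]
            exact fun h => hi h
        · -- i < σ i ; use j := i
          refine Finset.prod_eq_zero (i := i) ?_ ?_
          · simp only [Finset.mem_filter, Finset.mem_univ, true_and]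
            exact hgt
          · rw [cov_eq P ω hmeas hindep hgauss, if_neg (fun h => hi h.symm)]
    rw [Finset.sum_congr rfl (fun σ _ => hterm σ)]
    rw [Finset.sum_boole, Fintype.card_subtype]
  rw [hLHS, hRHS, card_matchings x, ← hs]
  rw [Nat.cast_prod]
  exact Finset.prod_congr rfl fun y _ => by rw [gm_eq_dbf, hm]
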